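/- Let X be a continuous vector field on an open set Ω ⊆ ℝ^d, F ⊆ Ω closed in Ω, and suppose every point x ∈ F lies on some integral curve γ : I → F of X defined on an open interval I ∋ 0 with γ(0) = x and γ(I) ⊆ F. Then every point of F lies on a *maximal* integral curve of X entirely contained in F (continuation argument: any integral curve contained in the closed set F extends to a maximal integral curve still contained in F). -/

import Mathlib

open Set Metric MeasureTheory

noncomputable section

abbrev Euc (d : ℕ) := EuclideanSpace ℝ (Fin d)

def IsIntCurveOn {d : ℕ} (X : Euc d → Euc d) (Ω : Set (Euc d))
    (γ : ℝ → Euc d) (I : Set ℝ) : Prop :=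
  ∀ s ∈ I, γ s ∈ Ω ∧ HasDerivAt γ (X (γ s)) s

def IsMaxIntCurveOn {d : ℕ} (X : Euc d → Euc d) (Ω : Set (Euc d))
    (γ : ℝ → Euc d) (I : Set ℝ) : Prop :=
  IsIntCurveOn X Ω γ I ∧
    ∀ (δ : ℝ → Euc d) (J : Set ℝ), J.OrdConnected → I ⊆ J →
      IsIntCurveOn X Ω δ J → Set.EqOn δ γ I → J = I

lemma rev_curve {d : ℕ} {X : Euc d → Euc d} {Ω : Set (Euc d)} {γ : ℝ → Euc d} {I : Set ℝ}
    (h : IsIntCurveOn X Ω γ I) :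
    IsIntCurveOn (fun y => -X y) Ω (fun s => γ (-s)) {s | -s ∈ I} := by
  intro s hs
  obtain ⟨h1, h2⟩ := h (-s) hs
  refine ⟨h1, ?_⟩
  have hneg : HasDerivAt (fun u : ℝ => -u) (-1 : ℝ) s := hasDerivAt_neg s
  have := h2.scomp s hneg
  simpa [Function.comp_def] using this

lemma shift_deriv {E : Type*} [NormedAddCommGroup E] [NormedSpace ℝ E]
    {σ : ℝ → E} {v : E} {c s : ℝ} (h : HasDerivAt σ v (s - c)) :
    HasDerivAt (fun u => σ (u - c)) v s := by
  have hsubc : HasDerivAt (fun u : ℝ => u - c) 1 s := (hasDerivAt_id s).sub_const c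
  have := HasDerivAt.scomp (𝕜 := ℝ) s (h := fun u : ℝ => u - c) (g₁ := σ) h hsubc
  simpa [Function.comp_def] using this

lemma extend_right {d : ℕ} {Ω : Set (Euc d)} {X : Euc d → Euc d}
    {F C : Set (Euc d)} (hC : IsClosed C) (hFC : F = C ∩ Ω)
    (hloc : ∀ x ∈ F, ∃ (γ : ℝ → Euc d) (I : Set ℝ),
      IsOpen I ∧ I.OrdConnected ∧ (0 : ℝ) ∈ I ∧ γ 0 = x ∧
      IsIntCurveOn X Ω γ I ∧ γ '' I ⊆ F)
    {γ : ℝ → Euc d} {I : Set ℝ} (hIopen : IsOpen I) (hIconn : I.OrdConnected)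
    (hI0 : (0:ℝ) ∈ I) (hint : IsIntCurveOn X Ω γ I) (hF : γ '' I ⊆ F)
    {δ : ℝ → Euc d} {J : Set ℝ} (hJconn : J.OrdConnected) (hIJ : I ⊆ J)
    (hδ : IsIntCurveOn X Ω δ J) (heq : Set.EqOn δ γ I)
    {t : ℝ} (ht : t ∈ J) (htI : ∀ s ∈ I, s < t) :
    ∃ (η : ℝ → Euc d) (K : Set ℝ), IsOpen K ∧ K.OrdConnected ∧ (0:ℝ) ∈ K ∧
      IsIntCurveOn X Ω η K ∧ η '' K ⊆ F ∧ I ⊆ K ∧ Set.EqOn η γ I ∧ ¬ K ⊆ I := by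
  have hbdd : BddAbove I := ⟨t, fun s hs => (htI s hs).le⟩
  set b := sSup I with hbdef
  have hsle : ∀ s ∈ I, s ≤ b := fun s hs => le_csSup hbdd hs
  have hb0 : 0 < b := by
    obtain ⟨ε, hε, hball⟩ := Metric.mem_nhds_iff.1 (hIopen.mem_nhds hI0)
    have : ε/2 ∈ I := hball (by
      rw [Metric.mem_ball, Real.dist_eq, sub_zero, abs_of_pos (half_pos hε)]
      linarith)
    have := hsle _ this
    linarith [half_pos hε]
  have hbI : b ∉ I := by
    intro hb
    obtain ⟨ε, hε, hball⟩ := Metric.mem_nhds_iff.1 (hIopen.mem_nhds hb)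
    have : b + ε/2 ∈ I := hball (by
      rw [Metric.mem_ball, Real.dist_eq, add_sub_cancel_left, abs_of_pos (half_pos hε)]
      linarith)
    have := hsle _ this
    linarith [half_pos hε]
  have hbt : b ≤ t := csSup_le ⟨0, hI0⟩ fun s hs => (htI s hs).le
  have hsub : Ico 0 b ⊆ I := by
    rintro s ⟨h0s, hsb⟩
    obtain ⟨s', hs'I, hss'⟩ := exists_lt_of_lt_csSup ⟨0, hI0⟩ hsb
    exact hIconn.out hI0 hs'I ⟨h0s, hss'.le⟩
  have hbJ : b ∈ J := hJconn.out (hIJ hI0) ht ⟨hb0.le, hbt⟩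
  obtain ⟨hδbΩ, hδbD⟩ := hδ b hbJ
  have hFsubC : F ⊆ C := by rw [hFC]; exact inter_subset_left
  have hδbF : δ b ∈ F := by
    rw [hFC]
    refine ⟨?_, hδbΩ⟩
    have hcont : Filter.Tendsto δ (nhdsWithin b (Iio b)) (nhds (δ b)) :=
      hδbD.continuousAt.continuousWithinAt
    refine hC.mem_of_tendsto hcont ?_
    have hmem : Ioo (0:ℝ) b ∈ nhdsWithin b (Iio b) := by
      rw [mem_nhdsWithin]
      exact ⟨Ioi 0, isOpen_Ioi, hb0, fun u hu => ⟨hu.1, hu.2⟩⟩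
    filter_upwards [hmem] with s hs
    exact hFsubC (hF ⟨s, hsub ⟨hs.1.le, hs.2⟩, (heq (hsub ⟨hs.1.le, hs.2⟩)).symm⟩)
  obtain ⟨σ, I', hI'open, hI'conn, hI'0, hσ0, hσint, hσF⟩ := hloc (δ b) hδbF
  set η : ℝ → Euc d := fun s => if s < b then γ s else σ (s - b) with hηdef
  set K : Set ℝ := I ∪ {s | b ≤ s ∧ s - b ∈ I'} with hKdef
  have hIlt : ∀ s ∈ I, s < b := fun s hs => lt_of_le_of_ne (hsle s hs) (fun h => hbI (h ▸ hs))
  have hηγ : ∀ s ∈ I, η s = γ s := fun s hs => if_pos (hIlt s hs)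
  have hηb : η b = δ b := by simp [hηdef, hσ0]
  have hbK : b ∈ K := Or.inr ⟨le_refl b, by simpa using hI'0⟩
  refine ⟨η, K, ?_, ?_, Or.inl hI0, ?_, ?_, subset_union_left, hηγ, fun h => hbI (h hbK)⟩
  · -- IsOpen K
    rw [isOpen_iff_mem_nhds]
    rintro s (hs | ⟨hbs, hsI'⟩)
    · exact Filter.mem_of_superset (hIopen.mem_nhds hs) subset_union_left
    · rcases lt_or_eq_of_le hbs with hlt | rfl
      · have : IsOpen (Ioi b ∩ (fun u => u - b) ⁻¹' I') :=
          (isOpen_Ioi.inter (hI'open.preimage (continuous_id.sub continuous_const)))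
        refine Filter.mem_of_superset (this.mem_nhds ⟨hlt, hsI'⟩) ?_
        rintro u ⟨hu1, hu2⟩
        exact Or.inr ⟨le_of_lt hu1, hu2⟩
      · -- s = b
        obtain ⟨ε, hε, hball⟩ := Metric.mem_nhds_iff.1 (hI'open.mem_nhds hI'0)
        have hε' : 0 < min ε b := lt_min hε hb0
        refine Filter.mem_of_superset (Metric.ball_mem_nhds b hε') ?_
        intro u hu
        rw [Metric.mem_ball, Real.dist_eq, abs_lt] at hu
        rcases lt_or_ge u b with h1 | h1
        · exact Or.inl (hsub ⟨by have := hu.1; have := min_le_right ε b; linarith, h1⟩)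
        · refine Or.inr ⟨h1, hball ?_⟩
          rw [Metric.mem_ball, Real.dist_eq]
          have := hu.2
          have := min_le_left ε b
          rw [abs_lt]
          constructor <;> [linarith; linarith]
  · -- OrdConnected
    constructor
    rintro p (hp | hp) q (hq | hq) y hy
    · exact Or.inl (hIconn.out hp hq hy)
    · rcases lt_or_ge y b with h1 | h1
      · rcases le_or_gt 0 y with h2 | h2
        · exact Or.inl (hsub ⟨h2, h1⟩)
        · exact Or.inl (hIconn.out hp hI0 ⟨hy.1, h2.le⟩)
      · refine Or.inr ⟨h1, hI'conn.out hI'0 hq.2 ⟨by linarith, by linarith [hy.2]⟩⟩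
    · exact absurd (lt_of_le_of_lt (hp.1.trans (hy.1.trans hy.2)) (hIlt q hq)) (lt_irrefl b)
    · refine Or.inr ⟨hp.1.trans hy.1, hI'conn.out hp.2 hq.2 ⟨by linarith [hy.1], by linarith [hy.2]⟩⟩
  · -- IsIntCurveOn
    rintro s hs
    rcases lt_trichotomy s b with hlt | rfl | hgt
    · have hsI : s ∈ I := by
        rcases hs with h | h
        · exact h
        · exact absurd hlt (not_lt.2 h.1)
      obtain ⟨h1, h2⟩ := hint s hsI
      have hev : η =ᶠ[nhds s] γ :=
        Filter.eventuallyEq_of_mem (isOpen_Iio.mem_nhds hlt) (fun u hu => if_pos hu)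
      rw [hηγ s hsI]
      exact ⟨h1, h2.congr_of_eventuallyEq hev⟩
    · rw [hηb]
      refine ⟨hδbΩ, ?_⟩
      have hleft : HasDerivWithinAt η (X (δ b)) (Iic b) b := by
        refine (hδbD.hasDerivWithinAt).congr_of_eventuallyEq ?_ hηb
        have hmem : Ioc (0:ℝ) b ∈ nhdsWithin b (Iic b) := by
          rw [mem_nhdsWithin]
          exact ⟨Ioi 0, isOpen_Ioi, hb0, fun u hu => ⟨hu.1, hu.2⟩⟩
        filter_upwards [hmem] with u hu
        rcases lt_or_eq_of_le hu.2 with h1 | rfl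
        · have huI : u ∈ I := hsub ⟨hu.1.le, h1⟩
          rw [hηγ u huI]
          exact (heq huI).symm
        · exact hηb
      have hright : HasDerivWithinAt η (X (δ b)) (Ici b) b := by
        obtain ⟨_, hσD⟩ := hσint 0 hI'0
        have hσD' : HasDerivAt σ (X (σ 0)) (b - b) := by rw [sub_self]; exact hσD
        have hshift : HasDerivAt (fun u : ℝ => σ (u - b)) (X (σ 0)) b := shift_deriv hσD'
        rw [hσ0] at hshift
        refine (hshift.hasDerivWithinAt).congr ?_ (by simp [hηdef])
        intro u hu
        simp only [hηdef]
        rw [if_neg (not_lt.2 hu)]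
      have := hleft.union hright
      rw [Iic_union_Ici] at this
      exact this.hasDerivAt (by simp)
    · have hsK : b ≤ s ∧ s - b ∈ I' := by
        rcases hs with h | h
        · exact absurd hgt (not_lt.2 (hIlt s h).le)
        · exact h
      obtain ⟨h1, h2⟩ := hσint (s - b) hsK.2
      have hshift : HasDerivAt (fun u : ℝ => σ (u - b)) (X (σ (s - b))) s := shift_deriv h2
      have hev : η =ᶠ[nhds s] (fun u => σ (u - b)) :=
        Filter.eventuallyEq_of_mem (isOpen_Ioi.mem_nhds hgt)
          (fun u hu => if_neg (not_lt.2 (le_of_lt hu)))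
      have hηs : η s = σ (s - b) := if_neg (not_lt.2 (le_of_lt hgt))
      rw [hηs]
      exact ⟨h1, hshift.congr_of_eventuallyEq hev⟩
  · -- image ⊆ F
    rintro _ ⟨s, hs, rfl⟩
    rcases hs with h | h
    · rw [hηγ s h]; exact hF ⟨s, h, rfl⟩
    · have : η s = σ (s - b) := by
        rcases lt_or_eq_of_le h.1 with h1 | rfl
        · exact if_neg (not_lt.2 h1.le)
        · exact if_neg (lt_irrefl _)
      rw [this]
      exact hσF ⟨s - b, h.2, rfl⟩

theorem stmt_19 {d : ℕ} (Ω : Set (Euc d)) (hΩ : IsOpen Ω)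
    (X : Euc d → Euc d) (hX : ContinuousOn X Ω)
    (F : Set (Euc d)) (hFΩ : F ⊆ Ω)
    (hFcl : ∃ C : Set (Euc d), IsClosed C ∧ F = C ∩ Ω)
    (hloc : ∀ x ∈ F, ∃ (γ : ℝ → Euc d) (I : Set ℝ),
      IsOpen I ∧ I.OrdConnected ∧ (0 : ℝ) ∈ I ∧ γ 0 = x ∧
      IsIntCurveOn X Ω γ I ∧ γ '' I ⊆ F) :
    ∀ x ∈ F, ∃ (γ : ℝ → Euc d) (I : Set ℝ),
      I.OrdConnected ∧ (0 : ℝ) ∈ I ∧ γ 0 = x ∧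
      IsMaxIntCurveOn X Ω γ I ∧ γ '' I ⊆ F := by
  classical
  obtain ⟨C, hC, hFC⟩ := hFcl
  intro x hx
  -- the poset of open integral curves through x staying in F
  let Pred : (ℝ → Euc d) × Set ℝ → Prop := fun p =>
    IsOpen p.2 ∧ p.2.OrdConnected ∧ (0:ℝ) ∈ p.2 ∧ p.1 0 = x ∧
      IsIntCurveOn X Ω p.1 p.2 ∧ p.1 '' p.2 ⊆ F
  let α := {p : (ℝ → Euc d) × Set ℝ // Pred p}
  let r : α → α → Prop := fun p q => p.1.2 ⊆ q.1.2 ∧ Set.EqOn q.1.1 p.1.1 p.1.2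
  obtain ⟨γ₀, I₀, hI₀open, hI₀conn, hI₀0, hγ₀0, hγ₀int, hγ₀F⟩ := hloc x hx
  have a₀ : α := ⟨(γ₀, I₀), hI₀open, hI₀conn, hI₀0, hγ₀0, hγ₀int, hγ₀F⟩
  have htrans : ∀ {a b c : α}, r a b → r b c → r a c := by
    rintro a b c ⟨h1, h2⟩ ⟨h3, h4⟩
    exact ⟨h1.trans h3, fun t ht => (h4 (h1 ht)).trans (h2 ht)⟩
  have hchain : ∀ c : Set α, IsChain r c → ∃ ub, ∀ a ∈ c, r a ub := by
    intro c hc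
    rcases c.eq_empty_or_nonempty with rfl | ⟨p₀, hp₀⟩
    · exact ⟨a₀, by simp⟩
    · set Γ : ℝ → Euc d := fun t =>
        if h : ∃ p, p ∈ c ∧ t ∈ p.1.2 then h.choose.1.1 t else x with hΓdef
      set U : Set ℝ := ⋃ p ∈ c, p.1.2 with hUdef
      have hmemU : ∀ t, t ∈ U ↔ ∃ p, p ∈ c ∧ t ∈ p.1.2 := by
        intro t
        simp [hUdef, Set.mem_iUnion]
      have hΓ : ∀ p ∈ c, ∀ t ∈ p.1.2, Γ t = p.1.1 t := by
        intro p hp t htp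
        have hex : ∃ q, q ∈ c ∧ t ∈ q.1.2 := ⟨p, hp, htp⟩
        simp only [hΓdef, dif_pos hex]
        obtain ⟨hqc, htq⟩ := hex.choose_spec
        rcases eq_or_ne hex.choose p with he | hne
        · rw [he]
        · rcases hc hqc hp hne with h | h
          · exact (h.2 htq).symm
          · exact h.2 htp
      refine ⟨⟨(Γ, U), ?_, ?_, ?_, ?_, ?_, ?_⟩, ?_⟩
      · exact isOpen_biUnion fun p hp => p.2.1
      · constructor
        intro u hu v hv y hy
        obtain ⟨p, hp, hup⟩ := (hmemU u).1 hu
        obtain ⟨q, hq, hvq⟩ := (hmemU v).1 hv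
        rcases eq_or_ne p q with rfl | hne
        · exact (hmemU y).2 ⟨p, hp, p.2.2.1.out hup hvq hy⟩
        · rcases hc hp hq hne with h | h
          · exact (hmemU y).2 ⟨q, hq, q.2.2.1.out (h.1 hup) hvq hy⟩
          · exact (hmemU y).2 ⟨p, hp, p.2.2.1.out hup (h.1 hvq) hy⟩
      · exact (hmemU 0).2 ⟨p₀, hp₀, p₀.2.2.2.1⟩
      · show Γ 0 = x
        rw [hΓ p₀ hp₀ 0 p₀.2.2.2.1]
        exact p₀.2.2.2.2.1
      · intro s hs
        obtain ⟨p, hp, hsp⟩ := (hmemU s).1 hs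
        obtain ⟨h1, h2⟩ := p.2.2.2.2.2.1 s hsp
        have hev : Γ =ᶠ[nhds s] p.1.1 :=
          Filter.eventuallyEq_of_mem (p.2.1.mem_nhds hsp) (fun u hu => hΓ p hp u hu)
        show Γ s ∈ Ω ∧ HasDerivAt Γ (X (Γ s)) s
        rw [hΓ p hp s hsp]
        exact ⟨h1, h2.congr_of_eventuallyEq hev⟩
      · rintro _ ⟨s, hs, rfl⟩
        obtain ⟨p, hp, hsp⟩ := (hmemU s).1 hs
        show Γ s ∈ F
        rw [hΓ p hp s hsp]
        exact p.2.2.2.2.2.2 ⟨s, hsp, rfl⟩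
      · intro a ha
        exact ⟨fun s hs => (hmemU s).2 ⟨a, ha, hs⟩, fun s hs => hΓ a ha s hs⟩
  obtain ⟨m, hm⟩ := exists_maximal_of_chains_bounded hchain htrans
  obtain ⟨⟨γm, Im⟩, hmopen, hmconn, hm0, hmx, hmint, hmF⟩ := m
  -- abbreviate maximality
  refine ⟨γm, Im, hmconn, hm0, hmx, ⟨hmint, ?_⟩, hmF⟩
  intro δ J hJconn hIJ hδ heq
  refine Set.Subset.antisymm ?_ hIJ
  by_contra hJI
  obtain ⟨t, htJ, htI⟩ := Set.not_subset.1 hJI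
  have hcases : (∀ s ∈ Im, s < t) ∨ (∀ s ∈ Im, t < s) := by
    by_contra h
    push_neg at h
    obtain ⟨h1, h2⟩ := h
    obtain ⟨s₁, hs₁, hts₁⟩ := h1
    obtain ⟨s₂, hs₂, hts₂⟩ := h2
    exact htI (hmconn.out hs₂ hs₁ ⟨hts₂, hts₁⟩)
  have hmmax : ∀ (η : ℝ → Euc d) (K : Set ℝ), IsOpen K → K.OrdConnected → (0:ℝ) ∈ K →
      IsIntCurveOn X Ω η K → η '' K ⊆ F → Im ⊆ K → Set.EqOn η γm Im → K ⊆ Im := by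
    intro η K hKopen hKconn hK0 hKint hKF hIK hKeq
    have hη0 : η 0 = x := by rw [hKeq hm0]; exact hmx
    have := hm ⟨(η, K), hKopen, hKconn, hK0, hη0, hKint, hKF⟩ ⟨hIK, hKeq⟩
    exact this.1
  rcases hcases with hright | hleft
  · obtain ⟨η, K, hKopen, hKconn, hK0, hKint, hKF, hIK, hKeq, hKnI⟩ :=
      extend_right hC hFC hloc hmopen hmconn hm0 hmint hmF hJconn hIJ hδ heq htJ hright
    exact hKnI (hmmax η K hKopen hKconn hK0 hKint hKF hIK hKeq)
  · -- time reversal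
    have hloc' : ∀ y ∈ F, ∃ (σ : ℝ → Euc d) (I' : Set ℝ),
        IsOpen I' ∧ I'.OrdConnected ∧ (0:ℝ) ∈ I' ∧ σ 0 = y ∧
        IsIntCurveOn (fun z => -X z) Ω σ I' ∧ σ '' I' ⊆ F := by
      intro y hy
      obtain ⟨σ, I', h1, h2, h3, h4, h5, h6⟩ := hloc y hy
      refine ⟨fun s => σ (-s), {s | -s ∈ I'}, h1.preimage continuous_neg, ?_, by simpa using h3,
        by simpa using h4, rev_curve h5, ?_⟩
      · constructor
        intro u hu v hv z hz
        exact h2.out hv hu ⟨neg_le_neg hz.2, neg_le_neg hz.1⟩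
      · rintro _ ⟨s, hs, rfl⟩
        exact h6 ⟨-s, hs, rfl⟩
    have hnegconn : ∀ (S : Set ℝ), S.OrdConnected → OrdConnected {s : ℝ | -s ∈ S} := by
      intro S hS
      constructor
      intro u hu v hv z hz
      exact hS.out hv hu ⟨neg_le_neg hz.2, neg_le_neg hz.1⟩
    have hIm' : {s : ℝ | -s ∈ Im} ⊆ {s : ℝ | -s ∈ J} := fun s hs => hIJ hs
    obtain ⟨η, K, hKopen, hKconn, hK0, hKint, hKF, hIK, hKeq, hKnI⟩ :=
      extend_right (X := fun z => -X z) hC hFC hloc'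
        (hmopen.preimage continuous_neg) (hnegconn Im hmconn) (by simpa using hm0)
        (rev_curve hmint) (by rintro _ ⟨s, hs, rfl⟩; exact hmF ⟨-s, hs, rfl⟩)
        (hnegconn J hJconn) hIm' (rev_curve hδ)
        (fun s hs => heq hs) (t := -t) (by simpa using htJ)
        (fun s hs => by have := hleft (-s) hs; linarith)
    -- reverse back
    set η' : ℝ → Euc d := fun s => η (-s) with hη'def
    set K' : Set ℝ := {s | -s ∈ K} with hK'def
    have hK'int : IsIntCurveOn X Ω η' K' := by
      intro s hs
      obtain ⟨h1, h2⟩ := rev_curve hKint s hs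
      exact ⟨h1, by simpa using h2⟩
    have hK'eq : Set.EqOn η' γm Im := by
      intro s hs
      have : -s ∈ {u : ℝ | -u ∈ Im} := by simpa using hs
      have := hKeq this
      simpa using this
    have hImK' : Im ⊆ K' := by
      intro s hs
      exact hIK (show -s ∈ {u : ℝ | -u ∈ Im} by simpa using hs)
    have hK'F : η' '' K' ⊆ F := by
      rintro _ ⟨s, hs, rfl⟩
      exact hKF ⟨-s, hs, rfl⟩
    have hK'nI : ¬ K' ⊆ Im := by
      intro h
      refine hKnI ?_
      intro u hu
      have : -u ∈ K' := by
        simp only [hK'def, Set.mem_setOf_eq, neg_neg]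
        exact hu
      simpa using h this
    have hK'0 : (0:ℝ) ∈ K' := by
      simp only [hK'def, Set.mem_setOf_eq, neg_zero]
      exact hK0
    exact hK'nI (hmmax η' K' (hKopen.preimage continuous_neg)
      (hnegconn K hKconn) hK'0 hK'int hK'F hImK' hK'eq)
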